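/- Let R(z,w) = 1 + z R_a(z) + w R_b(w) − zw/G(K_a(z), K_b(w)) be defined as a formal power series in z, w, where: G(z,w) = Σ_{k,l≥0} m_{k,l} z^{-k-1} w^{-l-1} is the formal two-variable Cauchy series of a family of moments m_{k,l} ∈ ℂ with m_{0,0} = 1, m_{k,0} and m_{0,l} the marginal moments; K_a, K_b are the compositional inverses at ∞ of the one-variable series G_a(z) = Σ m_{k,0} z^{-k-1}, G_b(w) = Σ m_{0,l} w^{-l-1}; and R_a(z) = K_a(z) − 1/z, R_b(w) = K_b(w) − 1/w. Then for each (m,n) with m+n ≥ 1, the coefficient of z^m w^n in R(z,w) is a polynomial (with integer coefficients) in the moments m_{k,l} with 0 ≤ k ≤ m, 0 ≤ l ≤ n, and the coefficient of the 'leading' moment m_{m,n} in this polynomial is 1. -/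

import Mathlib

/-! Theorem 2.4, Step 2 (Section 2.16) together with Remark 2.17 of Voiculescu's
"Free Probability for Pairs of Faces II", formalized universally over the polynomial
ring `ℤ[m_{k,l}]` of moments.  The two-variable Cauchy series
`G(z,w) = ∑ m_{k,l} z^{-k-1} w^{-l-1}` equals `z⁻¹w⁻¹ H(z⁻¹, w⁻¹)` with
`H(t,s) = ∑ m_{k,l} tᵏ sˡ`, and the compositional inverses `K_a, K_b` at `∞` of the
marginal series `G_a, G_b` are encoded by their reciprocals `La = 1/K_a`, `Lb = 1/K_b`
(power series with zero constant term and linear coefficient `1`, satisfying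
`La · h_a(La) = z`, i.e. `G_a(K_a(z)) = z`).  Then
`R(z,w) = 1 + zR_a(z) + wR_b(w) − zw/G(K_a(z),K_b(w))
        = (zK_a(z)) + (wK_b(w)) − 1 − (zK_a(z))(wK_b(w))·H(La(z),Lb(w))⁻¹`,
where `zK_a(z) = (La(z)/z)⁻¹`.  Each coefficient of `zᵐwⁿ` (for `m+n ≥ 1`) of `R` is an
integer polynomial in the moments `m_{k,l}` with `k ≤ m`, `l ≤ n`, and the coefficient of
the leading moment `m_{m,n}` in it is `1`. -/

open PowerSeries

noncomputable section

/-- The coefficient ring `ℤ[m_{k,l} : (k,l) ∈ ℕ×ℕ]`. -/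
abbrev MomRing : Type := MvPolynomial (ℕ × ℕ) ℤ

/-- The universal moment `m_{k,l}` (with `m_{0,0} = 1`). -/
def mom (k l : ℕ) : MomRing := if k = 0 ∧ l = 0 then 1 else MvPolynomial.X (k, l)

/-- Coefficientwise composition of power series (valid when `g` has zero constant
coefficient): coefficient of `zⁿ` in `f ∘ g` is `∑_{j ≤ n} (coeff j f)·(coeff n gʲ)`. -/
def psComp (f g : PowerSeries MomRing) : PowerSeries MomRing :=
  PowerSeries.mk fun n =>
    ∑ j ∈ Finset.range (n + 1), coeff j f * coeff n (g ^ j)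

/-- A one-variable power series viewed in `MomRing[[z,w]]`, in the variable `z`. -/
def embZ (f : PowerSeries MomRing) : MvPowerSeries (Fin 2) MomRing :=
  fun d => if d 1 = 0 then coeff (d 0) f else 0

/-- A one-variable power series viewed in `MomRing[[z,w]]`, in the variable `w`. -/
def embW (f : PowerSeries MomRing) : MvPowerSeries (Fin 2) MomRing :=
  fun d => if d 0 = 0 then coeff (d 1) f else 0

/-- `L/z`, for `L` with zero constant coefficient. -/
def shiftDiv (L : PowerSeries MomRing) : PowerSeries MomRing :=
  PowerSeries.mk fun n => coeff (n + 1) L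

/-- The substituted series `H(La(z), Lb(w)) ∈ MomRing[[z,w]]` where
`H(t,s) = ∑ m_{k,l} tᵏ sˡ` (well-defined as `La, Lb` have zero constant term). -/
def Hsub (La Lb : PowerSeries MomRing) : MvPowerSeries (Fin 2) MomRing :=
  fun d => ∑ e0 ∈ Finset.range (d 0 + 1), ∑ e1 ∈ Finset.range (d 1 + 1),
    mom e0 e1 * coeff (d 0) (La ^ e0) * coeff (d 1) (Lb ^ e1)

lemma coeffX_eq_zero_of_supported {p : MomRing} {s : Set (ℕ×ℕ)}
    (hp : p ∈ MvPolynomial.supported ℤ s) {v : ℕ×ℕ} (hv : v ∉ s) :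
    MvPolynomial.coeff (Finsupp.single v 1) p = 0 := by
  by_contra h
  have hmem : Finsupp.single v 1 ∈ p.support := MvPolynomial.mem_support_iff.mpr h
  have : v ∈ p.vars := (MvPolynomial.mem_vars v).mpr ⟨_, hmem, by simp⟩
  exact hv (MvPolynomial.mem_supported.mp hp this)

lemma coeffX_mul (v : ℕ×ℕ) (p q : MomRing) :
    MvPolynomial.coeff (Finsupp.single v 1) (p*q) =
      MvPolynomial.coeff 0 p * MvPolynomial.coeff (Finsupp.single v 1) q
      + MvPolynomial.coeff (Finsupp.single v 1) p * MvPolynomial.coeff 0 q := by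
  rw [MvPolynomial.coeff_mul, Finsupp.antidiagonal_single, Finset.sum_map]
  rw [show (Finset.HasAntidiagonal.antidiagonal (1:ℕ)) = {(0,1),(1,0)} from rfl]
  simp [Finsupp.single_zero]

lemma coeffX_mul3 (v : ℕ×ℕ) (p q r : MomRing) :
    MvPolynomial.coeff (Finsupp.single v 1) (p*q*r) =
      MvPolynomial.coeff (Finsupp.single v 1) p * MvPolynomial.coeff 0 q * MvPolynomial.coeff 0 r
      + MvPolynomial.coeff 0 p * MvPolynomial.coeff (Finsupp.single v 1) q * MvPolynomial.coeff 0 r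
      + MvPolynomial.coeff 0 p * MvPolynomial.coeff 0 q * MvPolynomial.coeff (Finsupp.single v 1) r := by
  rw [coeffX_mul, coeffX_mul, MvPolynomial.coeff_mul,
    show (Finset.HasAntidiagonal.antidiagonal (0 : (ℕ×ℕ) →₀ ℕ)) = {(0,0)} from rfl]
  simp; ring

lemma coeffX_one (v : ℕ×ℕ) : MvPolynomial.coeff (Finsupp.single v 1) (1 : MomRing) = 0 := by
  rw [MvPolynomial.coeff_one, if_neg]
  exact fun h => one_ne_zero (Finsupp.single_eq_zero.mp h.symm)

-- power series helpers
lemma ps_coeff_pow_eq_zero {L : PowerSeries MomRing} (h0 : constantCoeff L = 0)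
    {k n : ℕ} (h : n < k) : coeff n (L^k) = 0 := by
  have : (X : PowerSeries MomRing)^k ∣ L^k :=
    pow_dvd_pow_of_dvd (PowerSeries.X_dvd_iff.mpr h0) k
  exact PowerSeries.X_pow_dvd_iff.mp this n h

lemma ps_coeff_pow_self {L : PowerSeries MomRing} (h0 : constantCoeff L = 0)
    (h1 : coeff 1 L = 1) (k : ℕ) : coeff k (L^k) = 1 := by
  induction k with
  | zero => simp
  | succ k ih =>
    rw [pow_succ, PowerSeries.coeff_mul]
    rw [Finset.sum_eq_single (k, 1)]
    · rw [ih, h1, one_mul]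
    · rintro ⟨i, j⟩ hmem hne
      rw [Finset.HasAntidiagonal.mem_antidiagonal] at hmem
      rcases Nat.lt_or_ge i k with hi | hi
      · rw [ps_coeff_pow_eq_zero h0 hi, zero_mul]
      · rcases Nat.eq_zero_or_pos j with hj | hj
        · subst hj
          rw [coeff_zero_eq_constantCoeff_apply, h0, mul_zero]
        · have hik : i = k := by omega
          have hj1 : j = 1 := by omega
          exact absurd (by rw [hik, hj1]) hne
    · intro h
      exact absurd (show (k,1) ∈ Finset.HasAntidiagonal.antidiagonal (k+1) from
        Finset.HasAntidiagonal.mem_antidiagonal.mpr rfl) h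

lemma coeff_mul_psComp (f g : PowerSeries MomRing) (hg : constantCoeff g = 0) (n : ℕ) :
    coeff n (g * psComp f g) =
      ∑ k ∈ Finset.range (n+1), coeff k f * coeff n (g^(k+1)) := by
  rw [PowerSeries.coeff_mul]
  have h1 : ∀ p ∈ Finset.HasAntidiagonal.antidiagonal n,
      coeff p.1 g * coeff p.2 (psComp f g)
      = ∑ k ∈ Finset.range (n+1),
          coeff k f * (coeff p.1 g * coeff p.2 (g^k)) := by
    rintro ⟨i,j⟩ hmem
    rw [Finset.HasAntidiagonal.mem_antidiagonal] at hmem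
    have h2 : coeff j (psComp f g)
        = ∑ k ∈ Finset.range (n+1), coeff k f * coeff j (g^k) := by
      rw [psComp, PowerSeries.coeff_mk]
      apply Finset.sum_subset
      · intro k hk; rw [Finset.mem_range] at *; omega
      · intro k _ hk2
        rw [Finset.mem_range, not_lt] at hk2
        rw [ps_coeff_pow_eq_zero hg (by omega), mul_zero]
    rw [h2, Finset.mul_sum]
    exact Finset.sum_congr rfl fun k _ => by ring
  rw [Finset.sum_congr rfl h1, Finset.sum_comm]
  apply Finset.sum_congr rfl
  intro k _
  rw [← Finset.mul_sum, pow_succ', PowerSeries.coeff_mul]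

section Marginal

variable (x : ℕ → ℕ × ℕ)

def Vset (c : ℕ) : Set (ℕ × ℕ) := {q | ∃ j, 1 ≤ j ∧ j ≤ c ∧ q = x j}

lemma Vset_mono {c c' : ℕ} (h : c ≤ c') : Vset x c ⊆ Vset x c' := by
  rintro q ⟨j, h1, h2, h3⟩; exact ⟨j, h1, le_trans h2 h, h3⟩

lemma not_mem_Vset (hx : Function.Injective x) {c N : ℕ} (h : c < N) : x N ∉ Vset x c := by
  rintro ⟨j, h1, h2, h3⟩
  have := hx h3.symm
  omega

variable {x}
variable {L : PowerSeries MomRing}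

lemma marg_rec (hL0 : constantCoeff L = 0)
    (hK : L * psComp (PowerSeries.mk fun k => if k = 0 then 1 else MvPolynomial.X (x k)) L
        = PowerSeries.X) (n : ℕ) :
    coeff n L = (if n = 1 then 1 else 0)
      - ∑ i ∈ Finset.range n, MvPolynomial.X (x (i+1)) * coeff n (L^(i+2)) := by
  have h := congrArg (coeff n) hK
  rw [coeff_mul_psComp _ _ hL0, PowerSeries.coeff_X, Finset.sum_range_succ'] at h
  simp only [PowerSeries.coeff_mk, Nat.succ_ne_zero, if_false, eq_self_iff_true, if_true,
    one_mul, zero_add, pow_one] at h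
  rw [← h]; ring

lemma powS_aux (hL0 : constantCoeff L = 0) {N : ℕ}
    (hN : ∀ i, i ≤ N → coeff i L ∈ MvPolynomial.supported ℤ (Vset x (i-1))) :
    ∀ k n, n ≤ N → coeff n (L^k) ∈ MvPolynomial.supported ℤ (Vset x (n-k)) := by
  intro k
  induction k with
  | zero =>
    intro n _
    rw [pow_zero, PowerSeries.coeff_one]
    split
    · exact Subalgebra.one_mem _
    · exact Subalgebra.zero_mem _
  | succ k ih =>
    intro n hn
    rw [pow_succ, PowerSeries.coeff_mul]
    apply Subalgebra.sum_mem
    rintro ⟨i,j⟩ hmem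
    rw [Finset.HasAntidiagonal.mem_antidiagonal] at hmem
    rcases Nat.lt_or_ge i k with hi | hi
    · rw [ps_coeff_pow_eq_zero hL0 hi, zero_mul]; exact Subalgebra.zero_mem _
    rcases Nat.eq_zero_or_pos j with hj | hj
    · rw [hj, coeff_zero_eq_constantCoeff_apply, hL0, mul_zero]
      exact Subalgebra.zero_mem _
    apply Subalgebra.mul_mem
    · exact MvPolynomial.supported_mono (Vset_mono x (by omega)) (ih i (by omega))
    · exact MvPolynomial.supported_mono (Vset_mono x (by omega)) (hN j (by omega))

lemma margS (hx : Function.Injective x) (hL0 : constantCoeff L = 0)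
    (hK : L * psComp (PowerSeries.mk fun k => if k = 0 then 1 else MvPolynomial.X (x k)) L
        = PowerSeries.X) :
    ∀ n, coeff n L ∈ MvPolynomial.supported ℤ (Vset x (n-1)) := by
  intro n
  induction n using Nat.strong_induction_on with
  | _ n IH =>
    rw [marg_rec hL0 hK n]
    apply Subalgebra.sub_mem
    · split
      · exact Subalgebra.one_mem _
      · exact Subalgebra.zero_mem _
    apply Subalgebra.sum_mem
    intro i hi
    rw [Finset.mem_range] at hi
    rcases Nat.lt_or_ge n (i+2) with hlt | hge
    · rw [ps_coeff_pow_eq_zero hL0 hlt, mul_zero]; exact Subalgebra.zero_mem _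
    apply Subalgebra.mul_mem
    · exact MvPolynomial.X_mem_supported.mpr ⟨i+1, by omega, by omega, rfl⟩
    · rw [pow_succ, PowerSeries.coeff_mul]
      apply Subalgebra.sum_mem
      rintro ⟨a,b⟩ hmem
      rw [Finset.HasAntidiagonal.mem_antidiagonal] at hmem
      rcases Nat.lt_or_ge a (i+1) with ha | ha
      · rw [ps_coeff_pow_eq_zero hL0 ha, zero_mul]; exact Subalgebra.zero_mem _
      rcases Nat.eq_zero_or_pos b with hb | hb
      · rw [hb, coeff_zero_eq_constantCoeff_apply, hL0, mul_zero]
        exact Subalgebra.zero_mem _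
      apply Subalgebra.mul_mem
      · exact MvPolynomial.supported_mono (Vset_mono x (by omega))
          (powS_aux hL0 (fun i' hi' => IH i' (by omega)) (i+1) a (by omega : a ≤ n-1))
      · exact MvPolynomial.supported_mono (Vset_mono x (by omega)) (IH b (by omega))

lemma margLead (hx : Function.Injective x) (hL0 : constantCoeff L = 0)
    (hL1 : coeff 1 L = 1)
    (hK : L * psComp (PowerSeries.mk fun k => if k = 0 then 1 else MvPolynomial.X (x k)) L
        = PowerSeries.X) (n : ℕ) (hn : 2 ≤ n) :
    MvPolynomial.coeff (Finsupp.single (x (n-1)) 1) (coeff n L) = -1 := by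
  rw [marg_rec hL0 hK n, MvPolynomial.coeff_sub, if_neg (by omega : ¬ n = 1),
    MvPolynomial.coeff_zero, MvPolynomial.coeff_sum]
  rw [Finset.sum_eq_single (n-2)]
  · have h1 : n - 2 + 1 = n - 1 := by omega
    have h2 : n - 2 + 2 = n := by omega
    rw [h1, h2, ps_coeff_pow_self hL0 hL1, coeffX_mul, MvPolynomial.coeff_zero_X,
      zero_mul, MvPolynomial.coeff_X', if_pos rfl, MvPolynomial.coeff_zero_one]
    ring
  · intro i hi hne
    rw [Finset.mem_range] at hi
    rw [coeffX_mul, MvPolynomial.coeff_zero_X, zero_mul, MvPolynomial.coeff_X', if_neg, zero_mul,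
      add_zero]
    intro heq
    have := hx ((Finsupp.single_left_inj one_ne_zero).mp heq)
    omega
  · intro h
    rw [Finset.mem_range] at h
    omega

lemma sd_coeff (L : PowerSeries MomRing) (i : ℕ) :
    coeff i (shiftDiv L) = coeff (i+1) L := PowerSeries.coeff_mk _ _

lemma sd_const (hL1 : coeff 1 L = 1) :
    constantCoeff (shiftDiv L) = ((1 : MomRingˣ) : MomRing) := by
  rw [← coeff_zero_eq_constantCoeff_apply, sd_coeff, zero_add, hL1, Units.val_one]

lemma Pser_zero (L : PowerSeries MomRing) :
    coeff 0 (PowerSeries.invOfUnit (shiftDiv L) 1) = 1 := by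
  rw [coeff_zero_eq_constantCoeff_apply, PowerSeries.constantCoeff_invOfUnit, inv_one,
    Units.val_one]

lemma Pser_rec (hL1 : coeff 1 L = 1) (m : ℕ) :
    coeff (m+1) (PowerSeries.invOfUnit (shiftDiv L) 1)
      = - ∑ p ∈ Finset.HasAntidiagonal.antidiagonal m,
          coeff (p.1+1+1) L
            * coeff p.2 (PowerSeries.invOfUnit (shiftDiv L) 1) := by
  have h := congrArg (coeff (m+1))
    (PowerSeries.mul_invOfUnit (shiftDiv L) 1 (sd_const hL1))
  rw [PowerSeries.coeff_mul, PowerSeries.coeff_one, if_neg (Nat.succ_ne_zero m),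
    Finset.Nat.antidiagonal_succ, Finset.sum_cons, Finset.sum_map] at h
  simp only [Function.Embedding.coe_prodMap, Function.Embedding.coeFn_mk, Prod.map_apply,
    Function.Embedding.refl_apply, Prod.map_fst, Prod.map_snd, id_eq, sd_coeff, zero_add,
    hL1, one_mul, Nat.succ_eq_add_one] at h
  exact eq_neg_of_add_eq_zero_left h

lemma PserS (hx : Function.Injective x) (hL0 : constantCoeff L = 0)
    (hL1 : coeff 1 L = 1)
    (hK : L * psComp (PowerSeries.mk fun k => if k = 0 then 1 else MvPolynomial.X (x k)) L
        = PowerSeries.X) :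
    ∀ n, coeff n (PowerSeries.invOfUnit (shiftDiv L) 1)
        ∈ MvPolynomial.supported ℤ (Vset x n) := by
  intro n
  induction n using Nat.strong_induction_on with
  | _ n IH =>
    match n with
    | 0 => rw [Pser_zero]; exact Subalgebra.one_mem _
    | (m+1) =>
      rw [Pser_rec hL1]
      apply Subalgebra.neg_mem
      apply Subalgebra.sum_mem
      rintro ⟨i,j⟩ hmem
      rw [Finset.HasAntidiagonal.mem_antidiagonal] at hmem
      apply Subalgebra.mul_mem
      · exact MvPolynomial.supported_mono (Vset_mono x (by omega : (i+1+1)-1 ≤ m+1))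
          (margS hx hL0 hK (i+1+1))
      · exact MvPolynomial.supported_mono (Vset_mono x (by omega : j ≤ m+1))
          (IH j (by omega))

lemma PserL (hx : Function.Injective x) (hL0 : constantCoeff L = 0)
    (hL1 : coeff 1 L = 1)
    (hK : L * psComp (PowerSeries.mk fun k => if k = 0 then 1 else MvPolynomial.X (x k)) L
        = PowerSeries.X) (n : ℕ) (hn : 1 ≤ n) :
    MvPolynomial.coeff (Finsupp.single (x n) 1)
      (coeff n (PowerSeries.invOfUnit (shiftDiv L) 1)) = 1 := by
  obtain ⟨m, rfl⟩ : ∃ m, n = m + 1 := ⟨n - 1, by omega⟩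
  rw [Pser_rec hL1, MvPolynomial.coeff_neg, MvPolynomial.coeff_sum]
  rw [Finset.sum_eq_single (m, 0)]
  · have h1 : m + 1 + 1 - 1 = m + 1 := by omega
    rw [coeffX_mul, Pser_zero, coeffX_one, mul_zero, zero_add,
      show (m:ℕ)+1+1 = (m+2) from rfl]
    rw [show x (m+1) = x ((m+2)-1) from by norm_num]
    rw [margLead hx hL0 hL1 hK (m+2) (by omega), MvPolynomial.coeff_zero_one]
    ring
  · rintro ⟨i,j⟩ hmem hne
    rw [Finset.HasAntidiagonal.mem_antidiagonal] at hmem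
    rw [coeffX_mul]
    have hPj : MvPolynomial.coeff (Finsupp.single (x (m+1)) 1)
        (coeff j (PowerSeries.invOfUnit (shiftDiv L) 1)) = 0 := by
      apply coeffX_eq_zero_of_supported (PserS hx hL0 hL1 hK j)
      exact not_mem_Vset x hx (by omega)
    have hSi : MvPolynomial.coeff (Finsupp.single (x (m+1)) 1) (coeff (i+1+1) L) = 0 := by
      apply coeffX_eq_zero_of_supported (margS hx hL0 hK (i+1+1))
      apply not_mem_Vset x hx
      have : i ≠ m := fun h => hne (by simp [h]; omega)
      omega
    rw [hPj, hSi, mul_zero, zero_mul, add_zero]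
  · intro h
    exact absurd (Finset.HasAntidiagonal.mem_antidiagonal.mpr (by omega)) h

end Marginal

lemma powS (hx : Function.Injective x) (hL0 : constantCoeff L = 0)
    (hK : L * psComp (PowerSeries.mk fun k => if k = 0 then 1 else MvPolynomial.X (x k)) L
        = PowerSeries.X) (k n : ℕ) :
    coeff n (L^k) ∈ MvPolynomial.supported ℤ (Vset x (n-k)) :=
  powS_aux hL0 (fun i _ => margS hx hL0 hK i) k n le_rfl

def xa : ℕ → ℕ × ℕ := fun k => (k, 0)
def xb : ℕ → ℕ × ℕ := fun k => (0, k)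

lemma xa_inj : Function.Injective xa := fun a b h => congrArg Prod.fst h
lemma xb_inj : Function.Injective xb := fun a b h => congrArg Prod.snd h

lemma momA_eq : (PowerSeries.mk fun n => mom n 0)
    = PowerSeries.mk fun k => if k = 0 then 1 else MvPolynomial.X (xa k) := by
  congr 1; funext k; simp [mom, xa]

lemma momB_eq : (PowerSeries.mk fun n => mom 0 n)
    = PowerSeries.mk fun k => if k = 0 then 1 else MvPolynomial.X (xb k) := by
  congr 1; funext k; simp [mom, xb]

lemma mom_mem_supported {k l : ℕ} {s : Set (ℕ×ℕ)} (h : (k,l) ∈ s) :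
    mom k l ∈ MvPolynomial.supported ℤ s := by
  rw [mom]; split
  · exact Subalgebra.one_mem _
  · exact MvPolynomial.X_mem_supported.mpr h

lemma coeffX_mom (v : ℕ×ℕ) (hv : v ≠ (0,0)) (k l : ℕ) :
    MvPolynomial.coeff (Finsupp.single v 1) (mom k l) = if (k,l) = v then 1 else 0 := by
  rw [mom]
  by_cases h1 : k = 0 ∧ l = 0
  · rw [if_pos h1, coeffX_one, if_neg]
    intro h; apply hv; rw [← h, h1.1, h1.2]
  · rw [if_neg h1, MvPolynomial.coeff_X']
    by_cases h2 : (k,l) = v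
    · rw [if_pos (by rw [h2]), if_pos h2]
    · rw [if_neg, if_neg h2]
      intro h; exact h2 ((Finsupp.single_left_inj one_ne_zero).mp h)

lemma fin2_ext {d e : Fin 2 →₀ ℕ} (h0 : d 0 = e 0) (h1 : d 1 = e 1) : d = e := by
  ext i; fin_cases i; exacts [h0, h1]

lemma fin2_decomp (d : Fin 2 →₀ ℕ) :
    d = Finsupp.single 0 (d 0) + Finsupp.single 1 (d 1) := by
  apply fin2_ext <;> simp [Finsupp.single_apply]

variable {La Lb : PowerSeries MomRing}

lemma coeffX_powA (hLa0 : constantCoeff La = 0)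
    (hKa : La * psComp (PowerSeries.mk fun n => mom n 0) La = PowerSeries.X)
    (d0 d1 e : ℕ) (hv : ¬(d0 = 0 ∧ d1 = 0)) :
    MvPolynomial.coeff (Finsupp.single (d0,d1) 1) (coeff d0 (La ^ e)) = 0 := by
  have hKa' : La * psComp (PowerSeries.mk fun k =>
      if k = 0 then 1 else MvPolynomial.X (xa k)) La = PowerSeries.X := by
    rw [← momA_eq]; exact hKa
  rcases Nat.eq_zero_or_pos e with he | he
  · subst he
    rw [pow_zero, PowerSeries.coeff_one]
    split
    · exact coeffX_one _
    · exact MvPolynomial.coeff_zero _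
  · apply coeffX_eq_zero_of_supported (powS xa_inj hLa0 hKa' e d0)
    rintro ⟨j, hj1, hj2, hj3⟩
    rw [xa, Prod.ext_iff] at hj3
    simp only at hj3
    omega

lemma coeffX_powB (hLb0 : constantCoeff Lb = 0)
    (hKb : Lb * psComp (PowerSeries.mk fun n => mom 0 n) Lb = PowerSeries.X)
    (d0 d1 e : ℕ) (hv : ¬(d0 = 0 ∧ d1 = 0)) :
    MvPolynomial.coeff (Finsupp.single (d0,d1) 1) (coeff d1 (Lb ^ e)) = 0 := by
  have hKb' : Lb * psComp (PowerSeries.mk fun k =>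
      if k = 0 then 1 else MvPolynomial.X (xb k)) Lb = PowerSeries.X := by
    rw [← momB_eq]; exact hKb
  rcases Nat.eq_zero_or_pos e with he | he
  · subst he
    rw [pow_zero, PowerSeries.coeff_one]
    split
    · exact coeffX_one _
    · exact MvPolynomial.coeff_zero _
  · apply coeffX_eq_zero_of_supported (powS xb_inj hLb0 hKb' e d1)
    rintro ⟨j, hj1, hj2, hj3⟩
    rw [xb, Prod.ext_iff] at hj3
    simp only at hj3
    omega

def Tset (m n : ℕ) : Set (ℕ × ℕ) := {p : ℕ × ℕ | p.1 ≤ m ∧ p.2 ≤ n}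

lemma Va_sub_T {c m n : ℕ} (h : c ≤ m) : Vset xa c ⊆ Tset m n := by
  rintro q ⟨j, h1, h2, rfl⟩; exact ⟨by simpa [xa] using by omega, by simp [xa]⟩

lemma Vb_sub_T {c m n : ℕ} (h : c ≤ n) : Vset xb c ⊆ Tset m n := by
  rintro q ⟨j, h1, h2, rfl⟩; exact ⟨by simp [xb], by simpa [xb] using by omega⟩

lemma HsubS (hLa0 : constantCoeff La = 0)
    (hKa : La * psComp (PowerSeries.mk fun n => mom n 0) La = PowerSeries.X)
    (hLb0 : constantCoeff Lb = 0)
    (hKb : Lb * psComp (PowerSeries.mk fun n => mom 0 n) Lb = PowerSeries.X)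
    (d : Fin 2 →₀ ℕ) :
    Hsub La Lb d ∈ MvPolynomial.supported ℤ (Tset (d 0) (d 1)) := by
  have hKa' : La * psComp (PowerSeries.mk fun k =>
      if k = 0 then 1 else MvPolynomial.X (xa k)) La = PowerSeries.X := by
    rw [← momA_eq]; exact hKa
  have hKb' : Lb * psComp (PowerSeries.mk fun k =>
      if k = 0 then 1 else MvPolynomial.X (xb k)) Lb = PowerSeries.X := by
    rw [← momB_eq]; exact hKb
  apply Subalgebra.sum_mem
  intro e0 he0
  apply Subalgebra.sum_mem
  intro e1 he1
  rw [Finset.mem_range] at he0 he1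
  apply Subalgebra.mul_mem
  apply Subalgebra.mul_mem
  · exact mom_mem_supported ⟨by omega, by omega⟩
  · exact MvPolynomial.supported_mono (Va_sub_T (by omega)) (powS xa_inj hLa0 hKa' e0 (d 0))
  · exact MvPolynomial.supported_mono (Vb_sub_T (by omega)) (powS xb_inj hLb0 hKb' e1 (d 1))

lemma HsubL (hLa0 : constantCoeff La = 0) (hLa1 : coeff 1 La = 1)
    (hKa : La * psComp (PowerSeries.mk fun n => mom n 0) La = PowerSeries.X)
    (hLb0 : constantCoeff Lb = 0) (hLb1 : coeff 1 Lb = 1)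
    (hKb : Lb * psComp (PowerSeries.mk fun n => mom 0 n) Lb = PowerSeries.X)
    (d : Fin 2 →₀ ℕ) (hd : ¬ (d 0 = 0 ∧ d 1 = 0)) :
    MvPolynomial.coeff (Finsupp.single (d 0, d 1) 1) (Hsub La Lb d) = 1 := by
  have hv : ((d 0 : ℕ), (d 1 : ℕ)) ≠ (0,0) := by
    simpa [Prod.ext_iff] using hd
  rw [show Hsub La Lb d = ∑ e0 ∈ Finset.range (d 0 + 1), ∑ e1 ∈ Finset.range (d 1 + 1),
    mom e0 e1 * coeff (d 0) (La ^ e0) * coeff (d 1) (Lb ^ e1) from rfl]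
  rw [MvPolynomial.coeff_sum, Finset.sum_eq_single (d 0)]
  · rw [MvPolynomial.coeff_sum, Finset.sum_eq_single (d 1)]
    · rw [ps_coeff_pow_self hLa0 hLa1, ps_coeff_pow_self hLb0 hLb1, mul_one, mul_one,
        coeffX_mom _ hv, if_pos rfl]
    · intro e1 _ hne
      rw [coeffX_mul3, coeffX_powA hLa0 hKa _ _ _ hd, coeffX_powB hLb0 hKb _ _ _ hd,
        coeffX_mom _ hv, if_neg (fun h => hne (congrArg Prod.snd h))]
      ring
    · intro h; exact absurd (Finset.mem_range.mpr (by omega)) h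
  · intro e0 _ hne
    rw [MvPolynomial.coeff_sum]
    apply Finset.sum_eq_zero
    intro e1 _
    rw [coeffX_mul3, coeffX_powA hLa0 hKa _ _ _ hd, coeffX_powB hLb0 hKb _ _ _ hd,
      coeffX_mom _ hv, if_neg (fun h => hne (congrArg Prod.fst h))]
    ring
  · intro h; exact absurd (Finset.mem_range.mpr (by omega)) h

lemma Tset_mono {m n m' n' : ℕ} (hm : m ≤ m') (hn : n ≤ n') : Tset m n ⊆ Tset m' n' := by
  rintro q ⟨h1, h2⟩; exact ⟨le_trans h1 hm, le_trans h2 hn⟩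

lemma Hsub_const :
    MvPowerSeries.constantCoeff (Hsub La Lb) = ((1 : MomRingˣ) : MomRing) := by
  show Hsub La Lb 0 = 1
  simp [Hsub, mom]

lemma Hinv_zero :
    MvPowerSeries.coeff 0 (MvPowerSeries.invOfUnit (Hsub La Lb) 1) = 1 := by
  rw [MvPowerSeries.coeff_invOfUnit, if_pos rfl]
  simp

lemma coord_le_of_antidiagonal {x : (Fin 2 →₀ ℕ) × (Fin 2 →₀ ℕ)} {d : Fin 2 →₀ ℕ}
    (h : x ∈ Finset.HasAntidiagonal.antidiagonal d) (i : Fin 2) : x.1 i ≤ d i ∧ x.2 i ≤ d i := by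
  rw [Finset.HasAntidiagonal.mem_antidiagonal] at h
  have := DFunLike.congr_fun h i
  rw [Finsupp.add_apply] at this
  omega

lemma HinvS (hLa0 : constantCoeff La = 0)
    (hKa : La * psComp (PowerSeries.mk fun n => mom n 0) La = PowerSeries.X)
    (hLb0 : constantCoeff Lb = 0)
    (hKb : Lb * psComp (PowerSeries.mk fun n => mom 0 n) Lb = PowerSeries.X)
    (d : Fin 2 →₀ ℕ) :
    MvPowerSeries.coeff d (MvPowerSeries.invOfUnit (Hsub La Lb) 1)
      ∈ MvPolynomial.supported ℤ (Tset (d 0) (d 1)) := by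
  suffices h : ∀ N (d : Fin 2 →₀ ℕ), d 0 + d 1 ≤ N →
      MvPowerSeries.coeff d (MvPowerSeries.invOfUnit (Hsub La Lb) 1)
        ∈ MvPolynomial.supported ℤ (Tset (d 0) (d 1)) from h _ d le_rfl
  intro N
  induction N with
  | zero =>
    intro d hd
    have h0 : d 0 = 0 := by omega
    have h1 : d 1 = 0 := by omega
    have : d = 0 := fin2_ext (by simp [h0]) (by simp [h1])
    subst this
    rw [Hinv_zero]
    exact Subalgebra.one_mem _
  | succ N IH =>
    intro d hd
    rw [MvPowerSeries.coeff_invOfUnit]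
    split
    · simp only [inv_one, Units.val_one]; exact Subalgebra.one_mem _
    apply Subalgebra.mul_mem
    · simp only [inv_one, Units.val_one]
      exact Subalgebra.neg_mem _ (Subalgebra.one_mem _)
    apply Subalgebra.sum_mem
    intro x hx
    split
    · next hlt =>
      apply Subalgebra.mul_mem
      · exact MvPolynomial.supported_mono
          (Tset_mono (coord_le_of_antidiagonal hx 0).1 (coord_le_of_antidiagonal hx 1).1)
          (HsubS hLa0 hKa hLb0 hKb x.1)
      · have hle0 := (coord_le_of_antidiagonal hx 0).2
        have hle1 := (coord_le_of_antidiagonal hx 1).2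
        have hne : x.2 ≠ d := ne_of_lt hlt
        have hsum : x.2 0 + x.2 1 ≤ N := by
          by_contra hcon
          exact hne (fin2_ext (by omega) (by omega))
        
        exact MvPolynomial.supported_mono (Tset_mono hle0 hle1) (IH x.2 hsum)
    · exact Subalgebra.zero_mem _

lemma mv_coeff_apply (f : MvPowerSeries (Fin 2) MomRing) (d : Fin 2 →₀ ℕ) :
    MvPowerSeries.coeff d f = f d := rfl

lemma HinvL (hLa0 : constantCoeff La = 0) (hLa1 : coeff 1 La = 1)
    (hKa : La * psComp (PowerSeries.mk fun n => mom n 0) La = PowerSeries.X)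
    (hLb0 : constantCoeff Lb = 0) (hLb1 : coeff 1 Lb = 1)
    (hKb : Lb * psComp (PowerSeries.mk fun n => mom 0 n) Lb = PowerSeries.X)
    (d : Fin 2 →₀ ℕ) (hd : d ≠ 0) :
    MvPolynomial.coeff (Finsupp.single (d 0, d 1) 1)
      (MvPowerSeries.coeff d (MvPowerSeries.invOfUnit (Hsub La Lb) 1)) = -1 := by
  have hd' : ¬ (d 0 = 0 ∧ d 1 = 0) := by
    rintro ⟨h0, h1⟩; exact hd (fin2_ext (by simp [h0]) (by simp [h1]))
  rw [MvPowerSeries.coeff_invOfUnit, if_neg hd]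
  simp only [inv_one, Units.val_one, neg_mul, one_mul]
  rw [MvPolynomial.coeff_neg, MvPolynomial.coeff_sum]
  rw [Finset.sum_eq_single ((d, 0) : (Fin 2 →₀ ℕ) × (Fin 2 →₀ ℕ))]
  · rw [if_pos (pos_iff_ne_zero.mpr hd)]
    rw [coeffX_mul, Hinv_zero, mv_coeff_apply, coeffX_one, mul_zero, zero_add,
      HsubL hLa0 hLa1 hKa hLb0 hLb1 hKb d hd', MvPolynomial.coeff_zero_one, one_mul]
  · intro x hx hne
    split
    · next hlt =>
      rw [coeffX_mul]
      have hle0 := coord_le_of_antidiagonal hx 0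
      have hle1 := coord_le_of_antidiagonal hx 1
      have hx2 : MvPolynomial.coeff (Finsupp.single (d 0, d 1) 1)
          (MvPowerSeries.coeff x.2 (MvPowerSeries.invOfUnit (Hsub La Lb) 1)) = 0 := by
        apply coeffX_eq_zero_of_supported (HinvS hLa0 hKa hLb0 hKb x.2)
        rintro ⟨hc0, hc1⟩
        exact (ne_of_lt hlt) (fin2_ext (by omega) (by omega))
      have hx1 : MvPolynomial.coeff (Finsupp.single (d 0, d 1) 1)
          (MvPowerSeries.coeff x.1 (Hsub La Lb)) = 0 := by
        apply coeffX_eq_zero_of_supported (HsubS hLa0 hKa hLb0 hKb x.1)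
        rintro ⟨hc0, hc1⟩
        have he0 : x.1 0 = d 0 := by omega
        have he1 : x.1 1 = d 1 := by omega
        rw [Finset.HasAntidiagonal.mem_antidiagonal] at hx
        apply hne
        have hx1d : x.1 = d := fin2_ext he0 he1
        have hx20 : x.2 = 0 := by
          apply fin2_ext
          · have := DFunLike.congr_fun hx (0 : Fin 2)
            rw [Finsupp.add_apply] at this
            simp [he0] at this ⊢
            omega
          · have := DFunLike.congr_fun hx (1 : Fin 2)
            rw [Finsupp.add_apply] at this
            simp [he1] at this ⊢
            omega
        rw [← hx1d]
        exact Prod.ext rfl hx20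
      rw [hx1, hx2, mul_zero, zero_mul, add_zero]
    · exact MvPolynomial.coeff_zero _
  · intro h
    exact absurd (Finset.HasAntidiagonal.mem_antidiagonal.mpr (add_zero d)) h

lemma eap0 (m n : ℕ) :
    ((Finsupp.single (0 : Fin 2) m + Finsupp.single 1 n : Fin 2 →₀ ℕ)) 0 = m := by
  rw [Finsupp.add_apply, Finsupp.single_eq_same,
    Finsupp.single_eq_of_ne (show (0 : Fin 2) ≠ 1 by decide), add_zero]

lemma eap1 (m n : ℕ) :
    ((Finsupp.single (0 : Fin 2) m + Finsupp.single 1 n : Fin 2 →₀ ℕ)) 1 = n := by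
  rw [Finsupp.add_apply, Finsupp.single_eq_same,
    Finsupp.single_eq_of_ne (show (1 : Fin 2) ≠ 0 by decide), zero_add]

lemma coeff_embZ (f : PowerSeries MomRing) (d : Fin 2 →₀ ℕ) :
    MvPowerSeries.coeff d (embZ f)
      = if d 1 = 0 then coeff (d 0) f else 0 := rfl

lemma coeff_embW (f : PowerSeries MomRing) (d : Fin 2 →₀ ℕ) :
    MvPowerSeries.coeff d (embW f)
      = if d 0 = 0 then coeff (d 1) f else 0 := rfl

lemma coeff_embZW (f g : PowerSeries MomRing) (d : Fin 2 →₀ ℕ) :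
    MvPowerSeries.coeff d (embZ f * embW g)
      = coeff (d 0) f * coeff (d 1) g := by
  rw [MvPowerSeries.coeff_mul]
  rw [Finset.sum_eq_single ((Finsupp.single (0 : Fin 2) (d 0), Finsupp.single (1 : Fin 2) (d 1))
      : (Fin 2 →₀ ℕ) × (Fin 2 →₀ ℕ))]
  · simp [coeff_embZ, coeff_embW, Finsupp.single_eq_of_ne (show (0:Fin 2) ≠ 1 by decide),
      Finsupp.single_eq_of_ne (show (1:Fin 2) ≠ 0 by decide)]
  · intro x hx hne
    rw [Finset.HasAntidiagonal.mem_antidiagonal] at hx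
    rw [coeff_embZ, coeff_embW]
    by_cases h1 : x.1 1 = 0
    · by_cases h2 : x.2 0 = 0
      · exfalso
        apply hne
        have hc0 := DFunLike.congr_fun hx 0
        have hc1 := DFunLike.congr_fun hx 1
        rw [Finsupp.add_apply] at hc0 hc1
        have e1 : x.1 = Finsupp.single (0 : Fin 2) (d 0) := by
          apply fin2_ext
          · rw [Finsupp.single_eq_same]; omega
          · rw [Finsupp.single_eq_of_ne (by decide)]; exact h1
        have e2 : x.2 = Finsupp.single (1 : Fin 2) (d 1) := by
          apply fin2_ext
          · rw [Finsupp.single_eq_of_ne (by decide)]; exact h2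
          · rw [Finsupp.single_eq_same]; omega
        exact Prod.ext e1 e2
      · rw [if_neg h2, mul_zero]
    · rw [if_neg h1, zero_mul]
  · intro h
    refine absurd (Finset.HasAntidiagonal.mem_antidiagonal.mpr ?_) h
    exact (fin2_decomp d).symm

lemma term_lead (hLa0 : constantCoeff La = 0) (hLa1 : coeff 1 La = 1)
    (hKa : La * psComp (PowerSeries.mk fun n => mom n 0) La = PowerSeries.X)
    (hLb0 : constantCoeff Lb = 0) (hLb1 : coeff 1 Lb = 1)
    (hKb : Lb * psComp (PowerSeries.mk fun n => mom 0 n) Lb = PowerSeries.X)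
    (m n : ℕ) (hmn : 1 ≤ m + n)
    (x : (Fin 2 →₀ ℕ) × (Fin 2 →₀ ℕ))
    (hx : x ∈ Finset.HasAntidiagonal.antidiagonal (Finsupp.single (0:Fin 2) m + Finsupp.single 1 n)) :
    MvPolynomial.coeff (Finsupp.single ((m : ℕ), (n : ℕ)) 1)
      (coeff (x.1 0) (PowerSeries.invOfUnit (shiftDiv La) 1)
        * coeff (x.1 1) (PowerSeries.invOfUnit (shiftDiv Lb) 1)
        * MvPowerSeries.coeff x.2 (MvPowerSeries.invOfUnit (Hsub La Lb) 1))
      = (if x.1 = 0 then -1 else 0)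
        + (if (m = 0 ∨ n = 0) ∧ x.1 = Finsupp.single (0:Fin 2) m + Finsupp.single 1 n
            then 1 else 0) := by
  have hKa' : La * psComp (PowerSeries.mk fun k =>
      if k = 0 then 1 else MvPolynomial.X (xa k)) La = PowerSeries.X := by
    rw [← momA_eq]; exact hKa
  have hKb' : Lb * psComp (PowerSeries.mk fun k =>
      if k = 0 then 1 else MvPolynomial.X (xb k)) Lb = PowerSeries.X := by
    rw [← momB_eq]; exact hKb
  have hene : (Finsupp.single (0:Fin 2) m + Finsupp.single 1 n : Fin 2 →₀ ℕ) ≠ 0 := by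
    intro h
    have hm := DFunLike.congr_fun h 0
    have hn := DFunLike.congr_fun h 1
    rw [eap0] at hm
    rw [eap1] at hn
    simp only [Finsupp.coe_zero, Pi.zero_apply] at hm hn
    omega
  rw [Finset.HasAntidiagonal.mem_antidiagonal] at hx
  have hc0 : x.1 0 + x.2 0 = m := by
    have h := DFunLike.congr_fun hx 0
    rw [Finsupp.add_apply, eap0] at h
    exact h
  have hc1 : x.1 1 + x.2 1 = n := by
    have h := DFunLike.congr_fun hx 1
    rw [Finsupp.add_apply, eap1] at h
    exact h
  by_cases hx1 : x.1 = 0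
  · have hx2 : x.2 = Finsupp.single (0:Fin 2) m + Finsupp.single 1 n := by
      rw [hx1, zero_add] at hx; exact hx
    rw [hx1, hx2]
    simp only [Finsupp.coe_zero, Pi.zero_apply]
    rw [Pser_zero, Pser_zero, one_mul, one_mul]
    have hL := HinvL hLa0 hLa1 hKa hLb0 hLb1 hKb _ hene
    rw [eap0, eap1] at hL
    rw [hL, if_neg (show ¬((m = 0 ∨ n = 0) ∧ (0 : Fin 2 →₀ ℕ)
        = Finsupp.single (0:Fin 2) m + Finsupp.single 1 n) from
      fun h => hene h.2.symm)]
    norm_num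
  · by_cases hx2 : x.1 = Finsupp.single (0:Fin 2) m + Finsupp.single 1 n
    · have hx20 : x.2 = 0 := by
        apply fin2_ext
        · rw [hx2, eap0] at hc0
          simp only [Finsupp.coe_zero, Pi.zero_apply]
          omega
        · rw [hx2, eap1] at hc1
          simp only [Finsupp.coe_zero, Pi.zero_apply]
          omega
      rw [hx2, hx20, eap0, eap1, Hinv_zero, mul_one, if_neg hene]
      rcases Nat.eq_zero_or_pos n with hn0 | hn0
      · subst hn0
        rw [Pser_zero, mul_one, if_pos ⟨Or.inr rfl, rfl⟩]
        have hl := PserL xa_inj hLa0 hLa1 hKa' m (by omega)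
        rw [show xa m = (m, 0) from rfl] at hl
        rw [hl]
        norm_num
      · rcases Nat.eq_zero_or_pos m with hm0 | hm0
        · subst hm0
          rw [Pser_zero, one_mul, if_pos ⟨Or.inl rfl, rfl⟩]
          have hl := PserL xb_inj hLb0 hLb1 hKb' n (by omega)
          rw [show xb n = (0, n) from rfl] at hl
          rw [hl]
          norm_num
        · rw [if_neg (show ¬((m = 0 ∨ n = 0) ∧
              (Finsupp.single (0:Fin 2) m + Finsupp.single 1 n : Fin 2 →₀ ℕ)
              = Finsupp.single (0:Fin 2) m + Finsupp.single 1 n) from by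
            rintro ⟨hc, -⟩; rcases hc with h | h <;> omega)]
          have hPz : MvPolynomial.coeff (Finsupp.single ((m : ℕ), (n : ℕ)) 1)
              (coeff m (PowerSeries.invOfUnit (shiftDiv La) 1)) = 0 := by
            apply coeffX_eq_zero_of_supported (PserS xa_inj hLa0 hLa1 hKa' m)
            rintro ⟨j, hj1, hj2, hj3⟩
            rw [xa, Prod.ext_iff] at hj3
            simp only at hj3
            omega
          have hQz : MvPolynomial.coeff (Finsupp.single ((m : ℕ), (n : ℕ)) 1)
              (coeff n (PowerSeries.invOfUnit (shiftDiv Lb) 1)) = 0 := by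
            apply coeffX_eq_zero_of_supported (PserS xb_inj hLb0 hLb1 hKb' n)
            rintro ⟨j, hj1, hj2, hj3⟩
            rw [xb, Prod.ext_iff] at hj3
            simp only at hj3
            omega
          rw [coeffX_mul, hPz, hQz, mul_zero, zero_mul, add_zero]
    · have hPz : MvPolynomial.coeff (Finsupp.single ((m : ℕ), (n : ℕ)) 1)
          (coeff (x.1 0) (PowerSeries.invOfUnit (shiftDiv La) 1)) = 0 := by
        apply coeffX_eq_zero_of_supported (PserS xa_inj hLa0 hLa1 hKa' (x.1 0))
        rintro ⟨j, hj1, hj2, hj3⟩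
        rw [xa, Prod.ext_iff] at hj3
        simp only at hj3
        apply hx2
        apply fin2_ext
        · rw [eap0]; omega
        · rw [eap1]; omega
      have hQz : MvPolynomial.coeff (Finsupp.single ((m : ℕ), (n : ℕ)) 1)
          (coeff (x.1 1) (PowerSeries.invOfUnit (shiftDiv Lb) 1)) = 0 := by
        apply coeffX_eq_zero_of_supported (PserS xb_inj hLb0 hLb1 hKb' (x.1 1))
        rintro ⟨j, hj1, hj2, hj3⟩
        rw [xb, Prod.ext_iff] at hj3
        simp only at hj3
        apply hx2
        apply fin2_ext
        · rw [eap0]; omega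
        · rw [eap1]; omega
      have hHz : MvPolynomial.coeff (Finsupp.single ((m : ℕ), (n : ℕ)) 1)
          (MvPowerSeries.coeff x.2 (MvPowerSeries.invOfUnit (Hsub La Lb) 1)) = 0 := by
        apply coeffX_eq_zero_of_supported (HinvS hLa0 hKa hLb0 hKb x.2)
        rintro ⟨h1, h2⟩
        simp only at h1 h2
        apply hx1
        apply fin2_ext
        · simp only [Finsupp.coe_zero, Pi.zero_apply]; omega
        · simp only [Finsupp.coe_zero, Pi.zero_apply]; omega
      rw [coeffX_mul3, hPz, hQz, hHz, if_neg hx1, if_neg (fun h => hx2 h.2)]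
      ring

theorem stmt10
    (La Lb : PowerSeries MomRing)
    (hLa0 : constantCoeff La = 0) (hLa1 : coeff 1 La = 1)
    (hLb0 : constantCoeff Lb = 0) (hLb1 : coeff 1 Lb = 1)
    (hKa : La * psComp (PowerSeries.mk fun n => mom n 0) La = PowerSeries.X)
    (hKb : Lb * psComp (PowerSeries.mk fun n => mom 0 n) Lb = PowerSeries.X)
    (R : MvPowerSeries (Fin 2) MomRing)
    (hR : R = embZ (PowerSeries.invOfUnit (shiftDiv La) 1)
            + embW (PowerSeries.invOfUnit (shiftDiv Lb) 1) - 1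
            - embZ (PowerSeries.invOfUnit (shiftDiv La) 1)
              * embW (PowerSeries.invOfUnit (shiftDiv Lb) 1)
              * MvPowerSeries.invOfUnit (Hsub La Lb) 1) :
    ∀ m n : ℕ, 1 ≤ m + n →
      (MvPowerSeries.coeff (Finsupp.single 0 m + Finsupp.single 1 n) R
          ∈ MvPolynomial.supported ℤ {p : ℕ × ℕ | p.1 ≤ m ∧ p.2 ≤ n}) ∧
      MvPolynomial.coeff (Finsupp.single (m, n) 1)
          (MvPowerSeries.coeff (Finsupp.single 0 m + Finsupp.single 1 n) R) = 1 := by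
  intro m n hmn
  have hKa' : La * psComp (PowerSeries.mk fun k =>
      if k = 0 then 1 else MvPolynomial.X (xa k)) La = PowerSeries.X := by
    rw [← momA_eq]; exact hKa
  have hKb' : Lb * psComp (PowerSeries.mk fun k =>
      if k = 0 then 1 else MvPolynomial.X (xb k)) Lb = PowerSeries.X := by
    rw [← momB_eq]; exact hKb
  have hene : (Finsupp.single (0:Fin 2) m + Finsupp.single 1 n : Fin 2 →₀ ℕ) ≠ 0 := by
    intro h
    have hm := DFunLike.congr_fun h 0
    have hn := DFunLike.congr_fun h 1
    rw [eap0] at hm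
    rw [eap1] at hn
    simp only [Finsupp.coe_zero, Pi.zero_apply] at hm hn
    omega
  have hA : MvPowerSeries.coeff (Finsupp.single 0 m + Finsupp.single 1 n)
      (embZ (PowerSeries.invOfUnit (shiftDiv La) 1))
      = if n = 0 then coeff m (PowerSeries.invOfUnit (shiftDiv La) 1) else 0 := by
    rw [coeff_embZ, eap0, eap1]
  have hB : MvPowerSeries.coeff (Finsupp.single 0 m + Finsupp.single 1 n)
      (embW (PowerSeries.invOfUnit (shiftDiv Lb) 1))
      = if m = 0 then coeff n (PowerSeries.invOfUnit (shiftDiv Lb) 1) else 0 := by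
    rw [coeff_embW, eap0, eap1]
  have h1 : MvPowerSeries.coeff (Finsupp.single 0 m + Finsupp.single 1 n)
      (1 : MvPowerSeries (Fin 2) MomRing) = 0 := by
    rw [MvPowerSeries.coeff_one, if_neg hene]
  rw [hR, map_sub, map_sub, map_add, hA, hB, h1]
  constructor
  · -- support
    apply Subalgebra.sub_mem
    apply Subalgebra.sub_mem
    apply Subalgebra.add_mem
    · split
      · exact MvPolynomial.supported_mono (Va_sub_T le_rfl)
          (PserS xa_inj hLa0 hLa1 hKa' m)
      · exact Subalgebra.zero_mem _
    · split
      · exact MvPolynomial.supported_mono (Vb_sub_T le_rfl)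
          (PserS xb_inj hLb0 hLb1 hKb' n)
      · exact Subalgebra.zero_mem _
    · exact Subalgebra.zero_mem _
    · rw [MvPowerSeries.coeff_mul]
      apply Subalgebra.sum_mem
      intro x hxmem
      rw [coeff_embZW]
      have hle0 := coord_le_of_antidiagonal hxmem 0
      have hle1 := coord_le_of_antidiagonal hxmem 1
      rw [eap0] at hle0
      rw [eap1] at hle1
      apply Subalgebra.mul_mem
      apply Subalgebra.mul_mem
      · exact MvPolynomial.supported_mono (Va_sub_T hle0.1)
          (PserS xa_inj hLa0 hLa1 hKa' (x.1 0))
      · exact MvPolynomial.supported_mono (Vb_sub_T hle1.1)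
          (PserS xb_inj hLb0 hLb1 hKb' (x.1 1))
      · exact MvPolynomial.supported_mono (Tset_mono hle0.2 hle1.2)
          (HinvS hLa0 hKa hLb0 hKb x.2)
  · -- lead coefficient
    rw [MvPowerSeries.coeff_mul, MvPolynomial.coeff_sub, MvPolynomial.coeff_sub,
      MvPolynomial.coeff_add, MvPolynomial.coeff_zero, MvPolynomial.coeff_sum]
    have hstep : ∀ x ∈ Finset.HasAntidiagonal.antidiagonal
        (Finsupp.single (0:Fin 2) m + Finsupp.single 1 n),
        MvPolynomial.coeff (Finsupp.single ((m:ℕ),(n:ℕ)) 1)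
          (MvPowerSeries.coeff x.1
              (embZ (PowerSeries.invOfUnit (shiftDiv La) 1)
                * embW (PowerSeries.invOfUnit (shiftDiv Lb) 1))
            * MvPowerSeries.coeff x.2 (MvPowerSeries.invOfUnit (Hsub La Lb) 1))
        = (if x.1 = 0 then (-1 : ℤ) else 0)
          + (if (m = 0 ∨ n = 0) ∧ x.1 = Finsupp.single (0:Fin 2) m + Finsupp.single 1 n
              then 1 else 0) := by
      intro x hx
      rw [coeff_embZW]
      exact term_lead hLa0 hLa1 hKa hLb0 hLb1 hKb m n hmn x hx
    rw [Finset.sum_congr rfl hstep]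
    rw [Finset.sum_add_distrib]
    have hS1 : (∑ x ∈ Finset.HasAntidiagonal.antidiagonal (Finsupp.single (0:Fin 2) m + Finsupp.single 1 n),
        if x.1 = 0 then (-1 : ℤ) else 0) = -1 := by
      rw [Finset.sum_eq_single ((0, Finsupp.single (0:Fin 2) m + Finsupp.single 1 n)
          : (Fin 2 →₀ ℕ) × (Fin 2 →₀ ℕ))]
      · rw [if_pos rfl]
      · intro x hxm hne
        rw [Finset.HasAntidiagonal.mem_antidiagonal] at hxm
        rw [if_neg]
        intro h0
        rw [h0, zero_add] at hxm
        exact hne (Prod.ext h0 hxm)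
      · intro h
        exact absurd (Finset.HasAntidiagonal.mem_antidiagonal.mpr (zero_add _)) h
    have hS2 : (∑ x ∈ Finset.HasAntidiagonal.antidiagonal (Finsupp.single (0:Fin 2) m + Finsupp.single 1 n),
        if (m = 0 ∨ n = 0) ∧ x.1 = Finsupp.single (0:Fin 2) m + Finsupp.single 1 n
          then (1 : ℤ) else 0)
        = if m = 0 ∨ n = 0 then 1 else 0 := by
      rw [Finset.sum_eq_single ((Finsupp.single (0:Fin 2) m + Finsupp.single 1 n, 0)
          : (Fin 2 →₀ ℕ) × (Fin 2 →₀ ℕ))]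
      · by_cases hc : m = 0 ∨ n = 0
        · rw [if_pos ⟨hc, rfl⟩, if_pos hc]
        · rw [if_neg (fun h => hc h.1), if_neg hc]
      · intro x hxm hne
        rw [Finset.HasAntidiagonal.mem_antidiagonal] at hxm
        rw [if_neg]
        rintro ⟨-, h0⟩
        rw [h0] at hxm
        have hx2 : x.2 = 0 := by
          apply fin2_ext
          · have := DFunLike.congr_fun hxm 0
            rw [Finsupp.add_apply] at this
            simp only [Finsupp.coe_zero, Pi.zero_apply]
            omega
          · have := DFunLike.congr_fun hxm 1
            rw [Finsupp.add_apply] at this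
            simp only [Finsupp.coe_zero, Pi.zero_apply]
            omega
        exact hne (Prod.ext h0 hx2)
      · intro h
        exact absurd (Finset.HasAntidiagonal.mem_antidiagonal.mpr (add_zero _)) h
    rw [hS1, hS2]
    rcases Nat.eq_zero_or_pos n with hn0 | hn0
    · subst hn0
      have hl := PserL xa_inj hLa0 hLa1 hKa' m (by omega)
      rw [show xa m = (m, 0) from rfl] at hl
      rw [if_pos rfl, if_neg (by omega : ¬ m = 0), if_pos (Or.inr rfl), hl]
      norm_num
    · rcases Nat.eq_zero_or_pos m with hm0 | hm0
      · subst hm0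
        have hl := PserL xb_inj hLb0 hLb1 hKb' n (by omega)
        rw [show xb n = (0, n) from rfl] at hl
        rw [if_pos rfl, if_neg (by omega : ¬ n = 0), if_pos (Or.inl rfl), hl]
        norm_num
      · rw [if_neg (by omega : ¬ n = 0), if_neg (by omega : ¬ m = 0),
          if_neg (by omega : ¬ (m = 0 ∨ n = 0))]
        norm_num

end
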